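/- For any infinite cardinal λ there is a theory T = Th(A_E) of an E-combination in a language Σ with |Σ| = λ such that e-Sp(T) = 2^λ. -/

import Mathlib

open FirstOrder Language Cardinal

set_option autoImplicit false

/-- The induced structure on a subset of the universe of a structure in a relational language. -/
def subStructure (L : FirstOrder.Language.{0,0}) [L.IsRelational] (M : Type) [L.Structure M]
    (s : Set M) : L.Structure s where
  funMap := fun f _ => isEmptyElim f
  RelMap := fun r x => Structure.RelMap r (fun k => (x k : M))

/-- The `E`-class of an element `a`, as a set. -/
def classSet (L : FirstOrder.Language.{0,0}) {N : Type} [L.Structure N] (e : L.Relations 2)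
    (a : N) : Set N :=
  {b | Structure.RelMap e ![b, a]}

noncomputable instance (L : FirstOrder.Language.{0,0}) [L.IsRelational] {N : Type}
    [L.Structure N] (e : L.Relations 2) (a : N) : L.Structure (classSet L e a) :=
  subStructure L N (classSet L e a)

/-- The complete theory of the structure induced on the `E`-class of `a`. -/
noncomputable def classTheory (L : FirstOrder.Language.{0,0}) [L.IsRelational] {N : Type}
    [L.Structure N] (e : L.Relations 2) (a : N) : L.Theory :=
  L.completeTheory (classSet L e a)

/-- `T0` is the theory of some `E`-class of some model of `Th(M)` (i.e. of some `A' ≡ A_E`). -/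
def IsClassTheory (L : FirstOrder.Language.{0,0}) [L.IsRelational] (M : Type) [L.Structure M]
    (e : L.Relations 2) (T0 : L.Theory) : Prop :=
  ∃ (N : FirstOrder.Language.Theory.ModelType.{0,0,0} (L.completeTheory M)) (a : N),
    T0 = classTheory L e a

/-- The `e`-spectrum: the number of pairwise elementarily non-equivalent structures occurring
as `E`-classes of models of `Th(M)` that are not elementarily equivalent to any of the classes
of `M` (the classes of the elements `rep i`). -/
noncomputable def eSp (L : FirstOrder.Language.{0,0}) [L.IsRelational] (M : Type)
    [L.Structure M] (e : L.Relations 2) {I : Type} (rep : I → M) : Cardinal :=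
  #{T0 : L.Theory // IsClassTheory L M e T0 ∧ ∀ i : I, T0 ≠ classTheory L e (rep i)}

namespace Stmt16Aux


def myRel (J : Type) : ℕ → Type
  | 1 => J
  | 2 => PUnit
  | _ => Empty

def Lang (J : Type) : FirstOrder.Language.{0,0} := ⟨fun _ => Empty, myRel J⟩

instance (J : Type) : (Lang J).IsRelational := fun _ => inferInstanceAs (IsEmpty Empty)

abbrev Mod (J : Type) := Σ s : Finset J, Option {j : J // j ∈ s}

instance (J : Type) : Nonempty (Mod J) := ⟨⟨∅, none⟩⟩

instance MStr (J : Type) : (Lang J).Structure (Mod J) where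
  funMap := fun {n} f _ => f.elim
  RelMap := fun {n} r => match n, r with
    | 1, j => fun x => Option.map Subtype.val (x 0).2 = some j
    | 2, _ => fun x => (x 0).1 = (x 1).1
    | 0, r => r.elim
    | (_+3), r => r.elim

def ee (J : Type) : (Lang J).Relations 2 := PUnit.unit

def RR {J : Type} (j : J) : (Lang J).Relations 1 := j

lemma relMap_ee {J : Type} (a b : Mod J) :
    Structure.RelMap (ee J) ![a, b] ↔ a.1 = b.1 := Iff.rfl

lemma relMap_R {J : Type} (j : J) (a : Mod J) :
    Structure.RelMap (RR j) ![a] ↔ Option.map Subtype.val a.2 = some j :=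
  Iff.rfl


def phi {J : Type} (j : J) : (Lang J).Sentence :=
  ((RR j).boundedFormula₁ (Term.var (Sum.inr 0))).ex

lemma realize_phi {J : Type} (K : Type) [(Lang J).Structure K] (j : J) :
    K ⊨ phi j ↔ ∃ a : K, Structure.RelMap (RR j) ![a] := by
  simp only [phi, Sentence.Realize, Formula.Realize, BoundedFormula.realize_ex,
    BoundedFormula.realize_rel₁]
  constructor
  · rintro ⟨a, ha⟩
    exact ⟨a, by convert ha using 2; rfl⟩
  · rintro ⟨a, ha⟩
    exact ⟨a, by convert ha using 2; rfl⟩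

lemma coe_vec₁ {N : Type} (s : Set N) (c : s) :
    (fun k => ((![c] k : s) : N)) = ![(c : N)] := by
  funext k; fin_cases k; rfl

lemma phi_mem_classTheory {J : Type} {N : Type} [(Lang J).Structure N] (a : N) (j : J) :
    phi j ∈ classTheory (Lang J) (ee J) a ↔
      ∃ b : N, Structure.RelMap (ee J) ![b, a] ∧ Structure.RelMap (RR j) ![b] := by
  rw [classTheory, mem_completeTheory, realize_phi]
  constructor
  · rintro ⟨⟨b, hb⟩, hR⟩
    refine ⟨b, hb, ?_⟩
    have hR' : Structure.RelMap (RR j)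
        (fun k => ((![(⟨b, hb⟩ : classSet (Lang J) (ee J) a)] k :
          classSet (Lang J) (ee J) a) : N)) := hR
    rwa [coe_vec₁] at hR'
  · rintro ⟨b, hb, hR⟩
    refine ⟨⟨b, hb⟩, ?_⟩
    show Structure.RelMap (RR j)
        (fun k => ((![(⟨b, hb⟩ : classSet (Lang J) (ee J) a)] k :
          classSet (Lang J) (ee J) a) : N))
    rw [coe_vec₁]; exact hR

lemma phi_mem_classTheory_M {J : Type} (a : Mod J) (j : J) :
    phi j ∈ classTheory (Lang J) (ee J) a ↔ j ∈ a.1 := by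
  rw [phi_mem_classTheory]
  constructor
  · rintro ⟨b, hb, hR⟩
    rw [relMap_ee] at hb
    rw [relMap_R] at hR
    rcases hbb : b.2 with _ | ⟨j', hj'⟩ <;> rw [hbb] at hR
    · simp at hR
    · simp only [Option.map_some, Option.some.injEq] at hR
      subst hR; exact hb ▸ hj'
  · intro hj
    exact ⟨⟨a.1, some ⟨j, hj⟩⟩, rfl, rfl⟩

section Ultra

variable {J : Type}

def B (S : Set J) (j : J) : Set (Finset J) := {s | j ∈ s ↔ j ∈ S}

lemma fip (S : Set J) : (Filter.generate (Set.range (B S))).NeBot := by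
  classical
  rw [Filter.generate_neBot_iff]
  intro t ht tfin
  suffices h : ∀ u : Finset (Set (Finset J)), (↑u : Set (Set (Finset J))) ⊆ Set.range (B S) →
      ∃ t₁ : Finset J, ∀ s : Finset J, (∀ j ∈ t₁, (j ∈ s ↔ j ∈ S)) → ∀ A ∈ u, s ∈ A by
    obtain ⟨t₁, h₁⟩ := h tfin.toFinset (by rwa [Set.Finite.coe_toFinset])
    refine ⟨t₁.filter (· ∈ S), ?_⟩
    rw [Set.mem_sInter]
    intro A hA
    refine h₁ _ (fun j hj => ?_) A (tfin.mem_toFinset.2 hA)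
    simp only [Finset.mem_filter, hj, true_and]
  intro u
  induction u using Finset.induction_on with
  | empty => exact fun _ => ⟨∅, by simp⟩
  | @insert A u hA ih =>
    intro hsub
    obtain ⟨j, hj⟩ := hsub (Finset.mem_coe.2 (Finset.mem_insert_self A u))
    obtain ⟨t₁, h₁⟩ := ih (fun x hx =>
      hsub (Finset.mem_coe.2 (Finset.mem_insert_of_mem (Finset.mem_coe.1 hx))))
    refine ⟨insert j t₁, fun s hs A' hA' => ?_⟩
    rcases Finset.mem_insert.1 hA' with rfl | hA'
    · exact hj ▸ (hs j (Finset.mem_insert_self j t₁))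
    · exact h₁ s (fun j' h' => hs j' (Finset.mem_insert_of_mem h')) A' hA'

noncomputable def US (S : Set J) : Ultrafilter (Finset J) :=
  haveI := fip S
  Ultrafilter.of (Filter.generate (Set.range (B S)))

lemma B_mem_US (S : Set J) (j : J) : B S j ∈ US S :=
  haveI := fip S
  (Ultrafilter.of_le _) (Filter.GenerateSets.basic (Set.mem_range_self j))

abbrev NS (S : Set J) : Type := ((US S : Filter (Finset J)).Product (fun _ => Mod J))

instance NS_model (S : Set J) : ((Lang J).completeTheory (Mod J)).Model (NS S) :=
  ⟨fun φ hφ => (Ultraproduct.sentence_realize φ).2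
    (Filter.Eventually.of_forall fun _ => mem_completeTheory.1 hφ)⟩

def f0 : ∀ _ : Finset J, Mod J := fun s => ⟨s, none⟩

noncomputable def aS (S : Set J) : NS S := Quotient.mk _ f0

lemma relMap_NS (S : Set J) {n : ℕ} (r : (Lang J).Relations n)
    (x : Fin n → (∀ _ : Finset J, Mod J)) :
    Structure.RelMap (M := NS S) r (fun i => Quotient.mk _ (x i)) ↔
      ∀ᶠ s in (US S : Filter (Finset J)), Structure.RelMap r (fun i => x i s) :=
  relMap_quotient_mk' ((US S : Filter (Finset J)).productSetoid fun _ => Mod J) r x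

lemma phi_mem_classTheory_aS (S : Set J) (j : J) :
    phi j ∈ classTheory (Lang J) (ee J) (aS S) ↔ j ∈ S := by
  classical
  rw [phi_mem_classTheory]
  constructor
  · rintro ⟨b, hb, hR⟩
    obtain ⟨g, rfl⟩ := Quotient.exists_rep b
    have h2 : (![(Quotient.mk _ g : NS S), aS S]) = fun i => Quotient.mk _ ((![g, f0]) i) := by
      funext i; fin_cases i <;> rfl
    have h1 : (![(Quotient.mk _ g : NS S)]) = fun i : Fin 1 => Quotient.mk _ ((![g]) i) := by
      funext i; fin_cases i; rfl
    erw [h2, relMap_NS] at hb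
    erw [h1, relMap_NS] at hR
    have hb' : ∀ᶠ s in (US S : Filter (Finset J)), (g s).1 = s := by
      refine hb.mono fun s hs => ?_
      have : Structure.RelMap (ee J) ![g s, f0 s] := by
        convert hs using 1; funext i; fin_cases i <;> rfl
      exact (relMap_ee _ _).1 this
    have hR' : ∀ᶠ s in (US S : Filter (Finset J)),
        Option.map Subtype.val (g s).2 = some j := by
      refine hR.mono fun s hs => ?_
      have : Structure.RelMap (RR j) ![g s] := by
        convert hs using 1; funext i; fin_cases i; rfl
      exact (relMap_R _ _).1 this
    have hBj : ∀ᶠ s in (US S : Filter (Finset J)), (j ∈ s ↔ j ∈ S) := B_mem_US S j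
    obtain ⟨s, ⟨hg1, hg2⟩, hiff⟩ := ((hb'.and hR').and hBj).exists
    rcases hgs : (g s).2 with _ | ⟨j', hj'⟩ <;> rw [hgs] at hg2
    · simp at hg2
    · simp only [Option.map_some, Option.some.injEq] at hg2
      subst hg2
      exact hiff.1 (hg1 ▸ hj')
  · intro hj
    refine ⟨Quotient.mk _ (fun s => if h : j ∈ s then (⟨s, some ⟨j, h⟩⟩ : Mod J) else ⟨s, none⟩),
      ?_, ?_⟩
    · have h2 : (![(Quotient.mk _ (fun s => if h : j ∈ s then (⟨s, some ⟨j, h⟩⟩ : Mod J)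
          else ⟨s, none⟩) : NS S), aS S]) = fun i => Quotient.mk _
          ((![(fun s => if h : j ∈ s then (⟨s, some ⟨j, h⟩⟩ : Mod J) else ⟨s, none⟩), f0]) i) := by
        funext i; fin_cases i <;> rfl
      erw [h2, relMap_NS]
      refine Filter.Eventually.of_forall fun s => ?_
      have : Structure.RelMap (ee J) ![(if h : j ∈ s then (⟨s, some ⟨j, h⟩⟩ : Mod J)
          else ⟨s, none⟩), f0 s] := by
        rw [relMap_ee]; split <;> rfl
      convert this using 1; funext i; fin_cases i <;> rfl
    · have h1 : (![(Quotient.mk _ (fun s => if h : j ∈ s then (⟨s, some ⟨j, h⟩⟩ : Mod J)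
          else ⟨s, none⟩) : NS S)]) = fun i : Fin 1 => Quotient.mk _
          ((![(fun s => if h : j ∈ s then (⟨s, some ⟨j, h⟩⟩ : Mod J) else ⟨s, none⟩)]) i) := by
        funext i; fin_cases i; rfl
      erw [h1, relMap_NS]
      have hBj : ∀ᶠ s in (US S : Filter (Finset J)), (j ∈ s ↔ j ∈ S) := B_mem_US S j
      refine hBj.mono fun s hs => ?_
      have hjs : j ∈ s := hs.2 hj
      have : Structure.RelMap (RR j) ![(if h : j ∈ s then (⟨s, some ⟨j, h⟩⟩ : Mod J)
          else ⟨s, none⟩)] := by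
        rw [relMap_R, dif_pos hjs]; rfl
      convert this using 1; funext i; fin_cases i; rfl

end Ultra

def sigmaRelEquiv (J : Type) : (Σ n, (Lang J).Relations n) ≃ (J ⊕ PUnit) where
  toFun := fun x => match x with
    | ⟨1, j⟩ => Sum.inl j
    | ⟨2, _⟩ => Sum.inr PUnit.unit
    | ⟨0, r⟩ => r.elim
    | ⟨_+3, r⟩ => r.elim
  invFun := fun x => match x with
    | Sum.inl j => ⟨1, j⟩
    | Sum.inr _ => ⟨2, PUnit.unit⟩
  left_inv := by
    rintro ⟨n, r⟩
    match n, r with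
    | 1, j => rfl
    | 2, PUnit.unit => rfl
    | 0, r => exact r.elim
    | (n+3), r => exact r.elim
  right_inv := by rintro (j | ⟨⟩) <;> rfl

lemma card_Lang (J : Type) (h : ℵ₀ ≤ #J) : (Lang J).card = #J := by
  have h0 : IsEmpty (Σ l, (Lang J).Functions l) := ⟨fun x => x.2.elim⟩
  have : (Lang J).card = #((Σ l, (Lang J).Functions l) ⊕ (Σ l, (Lang J).Relations l)) := rfl
  rw [this, mk_sum, lift_id, lift_id, mk_eq_zero, zero_add, mk_congr (sigmaRelEquiv J),
    mk_sum, lift_id, lift_id, mk_punit, add_one_eq h]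

lemma card_sentence_le (J : Type) (h : ℵ₀ ≤ #J) : #((Lang J).Sentence) ≤ #J := by
  have h1 : #((Lang J).Sentence) ≤ #(Σ n, (Lang J).BoundedFormula Empty n) :=
    mk_le_of_injective (f := fun φ => ⟨0, φ⟩)
      (fun a b hab => by cases hab; rfl)
  refine h1.trans (BoundedFormula.card_le.trans ?_)
  rw [card_Lang J h]
  simp only [lift_id, mk_eq_zero, zero_add]
  exact max_le h le_rfl

lemma closure (J : Type) : ∀ (n : ℕ) (r : (Lang J).Relations n) (x : Fin n → Mod J),
    Structure.RelMap r x → ∀ k l : Fin n, Structure.RelMap (ee J) ![x k, x l] := by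
  intro n r
  match n, r with
  | 1, j =>
    intro x _ k l
    have hk : k = 0 := Subsingleton.elim _ _
    have hl : l = 0 := Subsingleton.elim _ _
    subst hk; subst hl
    exact (relMap_ee _ _).2 rfl
  | 2, r =>
    intro x h k l
    have h' : (x 0).1 = (x 1).1 := h
    fin_cases k <;> fin_cases l <;> rw [relMap_ee]
    · exact h'
    · exact h'.symm
  | 0, r => exact r.elim
  | (n+3), r => exact r.elim

end Stmt16Aux

/-- for any infinite cardinal `λ` there is a theory `T = Th(A_E)` of an
`E`-combination in a language `Σ` with `|Σ| = λ` whose `e`-spectrum equals `2 ^ λ`. -/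
theorem stmt16 (lam : Cardinal.{0}) (hlam : ℵ₀ ≤ lam) :
    ∃ (L : FirstOrder.Language.{0,0}) (hR : L.IsRelational) (M : Type) (S : L.Structure M)
      (e : L.Relations 2) (I : Type) (rep : I → M),
      (∀ a : M, S.RelMap e ![a, a]) ∧
      (∀ a b : M, S.RelMap e ![a, b] → S.RelMap e ![b, a]) ∧
      (∀ a b c : M, S.RelMap e ![a, b] → S.RelMap e ![b, c] → S.RelMap e ![a, c]) ∧
      (∀ (n : ℕ) (r : L.Relations n) (x : Fin n → M), S.RelMap r x →
        ∀ k l : Fin n, S.RelMap e ![x k, x l]) ∧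
      (∀ a : M, ∃ i : I, S.RelMap e ![a, rep i]) ∧
      L.card = lam ∧
      @eSp L hR M S e I rep = 2 ^ lam := by
  classical
  open Stmt16Aux in
  obtain ⟨J, hJ⟩ : ∃ J : Type, #J = lam := ⟨lam.out, mk_out lam⟩
  have hJ0 : ℵ₀ ≤ #J := hJ.symm ▸ hlam
  haveI : Infinite J := Cardinal.infinite_iff.2 hJ0
  refine ⟨Lang J, inferInstance, Stmt16Aux.Mod J, MStr J, ee J, Stmt16Aux.Mod J, id,
    fun a => (relMap_ee a a).2 rfl,
    fun a b h => (relMap_ee b a).2 ((relMap_ee a b).1 h).symm,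
    fun a b c h1 h2 => (relMap_ee a c).2 (((relMap_ee a b).1 h1).trans ((relMap_ee b c).1 h2)),
    closure J,
    fun a => ⟨a, (relMap_ee a a).2 rfl⟩,
    hJ ▸ card_Lang J hJ0, ?_⟩
  obtain ⟨e2⟩ : Nonempty (J ≃ J ⊕ J) := by
    apply Cardinal.eq.1
    simp only [mk_sum, lift_id]
    rw [hJ]
    exact (add_eq_self hlam).symm
  set big : Set J → Set J := fun S => e2 ⁻¹' (Sum.inl '' S ∪ Set.range Sum.inr) with hbig
  have hmem1 : ∀ (S : Set J) (j : J), e2.symm (Sum.inl j) ∈ big S ↔ j ∈ S := by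
    intro S j
    simp [hbig, Set.mem_preimage, Equiv.apply_symm_apply, Sum.inl.injEq]
  have hinf : ∀ S : Set J, (big S).Infinite := by
    intro S
    apply Set.infinite_of_injective_forall_mem (f := fun j : J => e2.symm (Sum.inr j))
    · exact fun a b hab => Sum.inr_injective (e2.symm.injective hab)
    · intro a
      simp [hbig, Set.mem_preimage, Equiv.apply_symm_apply]
  have hT : ∀ S : Set J, IsClassTheory (Lang J) (Stmt16Aux.Mod J) (ee J)
      (classTheory (Lang J) (ee J) (aS (big S))) :=
    fun S => ⟨⟨Stmt16Aux.NS (big S)⟩, aS (big S), rfl⟩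
  have hne : ∀ (S : Set J) (i : Stmt16Aux.Mod J),
      classTheory (Lang J) (ee J) (aS (big S)) ≠ classTheory (Lang J) (ee J) i := by
    intro S i heq
    obtain ⟨j, hj1, hj2⟩ := ((hinf S).diff i.1.finite_toSet).nonempty
    have h1 : phi j ∈ classTheory (Lang J) (ee J) (aS (big S)) :=
      (phi_mem_classTheory_aS (big S) j).2 hj1
    rw [heq] at h1
    exact hj2 ((phi_mem_classTheory_M i j).1 h1)
  rw [eSp]
  refine le_antisymm ?_ ?_
  · refine (mk_subtype_le _).trans ?_
    have : #((Lang J).Theory) = 2 ^ #((Lang J).Sentence) := mk_set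
    rw [this]
    exact power_le_power_left two_ne_zero (hJ ▸ card_sentence_le J hJ0)
  · have h2 : (2 : Cardinal) ^ lam = #(Set J) := by rw [mk_set, hJ]
    rw [h2]
    refine mk_le_of_injective (f := fun S : Set J =>
      ⟨classTheory (Lang J) (ee J) (aS (big S)), hT S, fun i => hne S i⟩) ?_
    intro S1 S2 h12
    have h12' : classTheory (Lang J) (ee J) (aS (big S1)) =
        classTheory (Lang J) (ee J) (aS (big S2)) := congrArg Subtype.val h12
    ext j
    rw [← hmem1 S1 j, ← hmem1 S2 j,
      ← phi_mem_classTheory_aS (big S1) (e2.symm (Sum.inl j)),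
      ← phi_mem_classTheory_aS (big S2) (e2.symm (Sum.inl j)), h12']
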